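/- arXiv:1802.08829 — 12 statements merged into one kernel-verified Lean document; each statement's English description precedes it below -/
import Mathlib

section
/- If (X,d) is a Ptolemy metric space, then the metric ρ(x,y) = log(1 + d(x,y)) is strongly hyperbolic with parameter ε = 2; that is, exp(ρ(x,y) + ρ(z,t)) ≤ exp(ρ(x,z) + ρ(y,t)) + exp(ρ(x,t) + ρ(z,y)) for all x, y, z, t ∈ X. -/
theorem stmt3 {X : Type*} [MetricSpace X]
    (hPt : ∀ x1 x2 x3 x4 : X,
      dist x1 x2 * dist x3 x4 ≤ dist x1 x4 * dist x2 x3 + dist x1 x3 * dist x2 x4)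
    (x y z t : X) :
    Real.exp (Real.log (1 + dist x y) + Real.log (1 + dist z t)) ≤
      Real.exp (Real.log (1 + dist x z) + Real.log (1 + dist y t)) +
      Real.exp (Real.log (1 + dist x t) + Real.log (1 + dist z y)) := by
  have pos : ∀ a b : X, (0:ℝ) < 1 + dist a b := fun a b => by positivity
  rw [Real.exp_add, Real.exp_add, Real.exp_add,
    Real.exp_log (pos x y), Real.exp_log (pos z t), Real.exp_log (pos x z),
    Real.exp_log (pos y t), Real.exp_log (pos x t), Real.exp_log (pos z y)]
  have h1 := hPt x y z t
  have t1 : dist x y ≤ dist x z + dist z y := dist_triangle x z y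
  have t2 : dist z t ≤ dist z x + dist x t := dist_triangle z x t
  have t3 : dist x y ≤ dist x t + dist t y := dist_triangle x t y
  have t4 : dist z t ≤ dist z y + dist y t := dist_triangle z y t
  rw [dist_comm z x] at t2
  rw [dist_comm t y] at t3
  rw [dist_comm y z] at h1
  have key : dist x y + dist z t ≤ dist x z + dist x t + dist z y + dist y t := by linarith
  ring_nf
  ring_nf at h1
  nlinarith [h1, key]
end

section
/- A metric space (X,d) satisfies exp(-ε(x|y)_o) ≤ exp(-ε(x|z)_o) + exp(-ε(z|y)_o) for all x,y,z,o ∈ X if and only if exp((ε/2)(d(x,y)+d(z,t))) ≤ exp((ε/2)(d(x,z)+d(y,t))) + exp((ε/2)(d(x,t)+d(z,y))) for all x,y,z,t ∈ X. -/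
lemma exp_shift (A B C c : ℝ) (h : Real.exp A ≤ Real.exp B + Real.exp C) :
    Real.exp (A + c) ≤ Real.exp (B + c) + Real.exp (C + c) := by
  rw [Real.exp_add, Real.exp_add, Real.exp_add, ← add_mul]
  exact mul_le_mul_of_nonneg_right h (Real.exp_nonneg c)

theorem stmt4 {X : Type*} [MetricSpace X] (ε : ℝ) (hε : 0 < ε) :
    (∀ x y z o : X,
      Real.exp (-ε * ((dist o x + dist o y - dist x y) / 2)) ≤
        Real.exp (-ε * ((dist o x + dist o z - dist x z) / 2)) +
        Real.exp (-ε * ((dist o z + dist o y - dist z y) / 2))) ↔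
    (∀ x y z t : X,
      Real.exp (ε / 2 * (dist x y + dist z t)) ≤
        Real.exp (ε / 2 * (dist x z + dist y t)) +
        Real.exp (ε / 2 * (dist x t + dist z y))) := by
  constructor
  · intro h x y z t
    have h' := exp_shift _ _ _ (ε / 2 * (dist t x + dist t y + dist t z)) (h x y z t)
    have e1 : ε / 2 * (dist x y + dist z t) =
        -ε * ((dist t x + dist t y - dist x y) / 2) +
          ε / 2 * (dist t x + dist t y + dist t z) := by
      rw [dist_comm z t]; ring
    have e2 : ε / 2 * (dist x z + dist y t) =
        -ε * ((dist t x + dist t z - dist x z) / 2) +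
          ε / 2 * (dist t x + dist t y + dist t z) := by
      rw [dist_comm y t]; ring
    have e3 : ε / 2 * (dist x t + dist z y) =
        -ε * ((dist t z + dist t y - dist z y) / 2) +
          ε / 2 * (dist t x + dist t y + dist t z) := by
      rw [dist_comm x t]; ring
    rw [e1, e2, e3]; exact h'
  · intro h x y z o
    have h' := exp_shift _ _ _ (-(ε / 2 * (dist o x + dist o y + dist o z))) (h x y z o)
    have e1 : -ε * ((dist o x + dist o y - dist x y) / 2) =
        ε / 2 * (dist x y + dist z o) + -(ε / 2 * (dist o x + dist o y + dist o z)) := by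
      rw [dist_comm z o]; ring
    have e2 : -ε * ((dist o x + dist o z - dist x z) / 2) =
        ε / 2 * (dist x z + dist y o) + -(ε / 2 * (dist o x + dist o y + dist o z)) := by
      rw [dist_comm y o]; ring
    have e3 : -ε * ((dist o z + dist o y - dist z y) / 2) =
        ε / 2 * (dist x o + dist z y) + -(ε / 2 * (dist o x + dist o y + dist o z)) := by
      rw [dist_comm x o]; ring
    rw [e1, e2, e3]; exact h'
end

section
/- If (X,d) is a Ptolemy metric space and p ∈ X, then s_p(x,y) = d(x,y)/((1+d(x,p))(1+d(y,p))) defines a metric on X. -/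
theorem stmt6 {X : Type*} [MetricSpace X]
    (hPt : ∀ x1 x2 x3 x4 : X,
      dist x1 x2 * dist x3 x4 ≤ dist x1 x4 * dist x2 x3 + dist x1 x3 * dist x2 x4)
    (p : X) :
    (∀ x y : X, 0 ≤ dist x y / ((1 + dist x p) * (1 + dist y p))) ∧
    (∀ x y : X, dist x y / ((1 + dist x p) * (1 + dist y p)) = 0 ↔ x = y) ∧
    (∀ x y : X, dist x y / ((1 + dist x p) * (1 + dist y p)) =
      dist y x / ((1 + dist y p) * (1 + dist x p))) ∧
    (∀ x y z : X, dist x z / ((1 + dist x p) * (1 + dist z p)) ≤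
      dist x y / ((1 + dist x p) * (1 + dist y p)) +
      dist y z / ((1 + dist y p) * (1 + dist z p))) := by
  have hpos : ∀ x : X, (0:ℝ) < 1 + dist x p := fun x => by positivity
  refine ⟨fun x y => by positivity, ?_, ?_, ?_⟩
  · intro x y
    rw [div_eq_zero_iff]
    constructor
    · rintro (h | h)
      · exact dist_eq_zero.mp h
      · exact absurd h (by positivity)
    · rintro rfl; left; simp
  · intro x y
    rw [dist_comm x y, mul_comm]
  · intro x y z
    have hx := hpos x; have hy := hpos y; have hz := hpos z
    rw [div_add_div _ _ (by positivity) (by positivity), div_le_div_iff₀ (by positivity) (by positivity)]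
    have htri := dist_triangle x y z
    have hP := hPt x z y p
    have h1 : (0:ℝ) ≤ dist x y := dist_nonneg
    have h2 : (0:ℝ) ≤ dist y z := dist_nonneg
    have h3 : (0:ℝ) ≤ dist x z := dist_nonneg
    have h4 : (0:ℝ) ≤ dist x p := dist_nonneg
    have h5 : (0:ℝ) ≤ dist y p := dist_nonneg
    have h6 : (0:ℝ) ≤ dist z p := dist_nonneg
    rw [dist_comm z y] at hP
    have hcore : dist x z * (1 + dist y p) ≤
        dist x y * (1 + dist z p) + dist y z * (1 + dist x p) := by nlinarith
    nlinarith [mul_le_mul_of_nonneg_right hcore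
      (le_of_lt (mul_pos (mul_pos hx hy) hz))]
end

section
/- If (X,d) is a Ptolemy metric space and p ∈ X, then the metric space (X, s_p), where s_p(x,y) = d(x,y)/((1+d(x,p))(1+d(y,p))), is again a Ptolemy space: s_p(x1,x2)s_p(x3,x4) ≤ s_p(x1,x3)s_p(x2,x4) + s_p(x1,x4)s_p(x2,x3) for all x1,x2,x3,x4 ∈ X. -/
theorem stmt7 {X : Type*} [MetricSpace X]
    (hPt : ∀ x1 x2 x3 x4 : X,
      dist x1 x2 * dist x3 x4 ≤ dist x1 x4 * dist x2 x3 + dist x1 x3 * dist x2 x4)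
    (p : X) (x1 x2 x3 x4 : X) :
    (dist x1 x2 / ((1 + dist x1 p) * (1 + dist x2 p))) *
      (dist x3 x4 / ((1 + dist x3 p) * (1 + dist x4 p))) ≤
    (dist x1 x3 / ((1 + dist x1 p) * (1 + dist x3 p))) *
      (dist x2 x4 / ((1 + dist x2 p) * (1 + dist x4 p))) +
    (dist x1 x4 / ((1 + dist x1 p) * (1 + dist x4 p))) *
      (dist x2 x3 / ((1 + dist x2 p) * (1 + dist x3 p))) := by
  set a1 := 1 + dist x1 p with ha1
  set a2 := 1 + dist x2 p with ha2
  set a3 := 1 + dist x3 p with ha3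
  set a4 := 1 + dist x4 p with ha4
  have hD : (0:ℝ) < a1 * a2 * a3 * a4 := by
    have := dist_nonneg (x := x1) (y := p)
    have := dist_nonneg (x := x2) (y := p)
    have := dist_nonneg (x := x3) (y := p)
    have := dist_nonneg (x := x4) (y := p)
    positivity
  rw [div_mul_div_comm, div_mul_div_comm, div_mul_div_comm,
    show a1 * a2 * (a3 * a4) = a1 * a2 * a3 * a4 by ring,
    show a1 * a3 * (a2 * a4) = a1 * a2 * a3 * a4 by ring,
    show a1 * a4 * (a2 * a3) = a1 * a2 * a3 * a4 by ring,
    ← add_div, div_le_div_iff_of_pos_right hD]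
  have := hPt x1 x2 x3 x4
  linarith
end

section
/- If (X,d) is a Ptolemy metric space and p ∈ X, then S_p(x,y) = log(1 + d(x,y)/((1+d(x,p))(1+d(y,p)))) is a metric on X that is strongly hyperbolic with parameter ε = 2: exp(S_p(x,y)+S_p(z,t)) ≤ exp(S_p(x,z)+S_p(y,t)) + exp(S_p(x,t)+S_p(z,y)) for all x,y,z,t ∈ X. -/
lemma core_tri (a b c u v w : ℝ) (ha : 0 ≤ a) (hb : 0 ≤ b) (hc : 0 ≤ c)
    (hu : 0 ≤ u) (hv : 0 ≤ v) (hw : 0 ≤ w)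
    (hP : b * w ≤ a * v + c * u) (ht : w ≤ u + v) :
    ((1+a)*(1+c) + w) * ((1+b)*(1+b)) ≤ ((1+a)*(1+b) + u) * ((1+b)*(1+c) + v) := by
  have h1 : b * w ≤ b * u + b * v := by nlinarith
  have h2 : b * (b * w) ≤ b * (a * v + c * u) := mul_le_mul_of_nonneg_left hP hb
  nlinarith [mul_nonneg hu hv]

lemma core_hyp (a b c e dxy dzt dxz dyt dxt dzy : ℝ)
    (ha : 0 ≤ a) (hb : 0 ≤ b) (hc : 0 ≤ c) (he : 0 ≤ e)
    (hxz : 0 ≤ dxz) (hyt : 0 ≤ dyt) (hxt : 0 ≤ dxt) (hzy : 0 ≤ dzy)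
    (h1 : dzt ≤ c + e) (h2 : dxy ≤ a + b)
    (h3 : dzt ≤ dzy + dyt) (h4 : dzt ≤ dxz + dxt)
    (h5 : dxy ≤ dxt + dyt) (h6 : dxy ≤ dxz + dzy)
    (hP : dxy * dzt ≤ dxt * dzy + dxz * dyt) :
    ((1+a)*(1+b) + dxy) * ((1+c)*(1+e) + dzt) ≤
      ((1+a)*(1+c) + dxz) * ((1+b)*(1+e) + dyt) +
      ((1+a)*(1+e) + dxt) * ((1+c)*(1+b) + dzy) := by
  have k1 : a*b*dzt ≤ a*b*(c+e) := mul_le_mul_of_nonneg_left h1 (mul_nonneg ha hb)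
  have k2 : a*dzt ≤ a*(dzy+dyt) := mul_le_mul_of_nonneg_left h3 ha
  have k3 : b*dzt ≤ b*(dxz+dxt) := mul_le_mul_of_nonneg_left h4 hb
  have k4 : c*dxy ≤ c*(dxt+dyt) := mul_le_mul_of_nonneg_left h5 hc
  have k5 : e*dxy ≤ e*(dxz+dzy) := mul_le_mul_of_nonneg_left h6 he
  have k6 : c*e*dxy ≤ c*e*(a+b) := mul_le_mul_of_nonneg_left h2 (mul_nonneg hc he)
  nlinarith [mul_nonneg ha hc, mul_nonneg hb he, mul_nonneg ha he, mul_nonneg hc hb,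
    mul_nonneg ha hb, mul_nonneg hc he,
    mul_nonneg (mul_nonneg ha hc) hyt, mul_nonneg (mul_nonneg hb he) hxz,
    mul_nonneg (mul_nonneg ha he) hzy, mul_nonneg (mul_nonneg hc hb) hxt,
    mul_nonneg (mul_nonneg ha hb) (mul_nonneg hc he)]

theorem stmt8 {X : Type*} [MetricSpace X]
    (hPt : ∀ x1 x2 x3 x4 : X,
      dist x1 x2 * dist x3 x4 ≤ dist x1 x4 * dist x2 x3 + dist x1 x3 * dist x2 x4)
    (p : X) :
    let S : X → X → ℝ := fun x y =>
      Real.log (1 + dist x y / ((1 + dist x p) * (1 + dist y p)))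
    (∀ x y : X, 0 ≤ S x y) ∧
    (∀ x y : X, S x y = 0 ↔ x = y) ∧
    (∀ x y : X, S x y = S y x) ∧
    (∀ x y z : X, S x z ≤ S x y + S y z) ∧
    (∀ x y z t : X,
      Real.exp (S x y + S z t) ≤ Real.exp (S x z + S y t) + Real.exp (S x t + S z y)) := by
  intro S
  have hD : ∀ x : X, (0:ℝ) < 1 + dist x p := fun x => by
    have := dist_nonneg (x := x) (y := p); linarith
  have hA1 : ∀ x y : X, (1:ℝ) ≤ 1 + dist x y / ((1 + dist x p) * (1 + dist y p)) := by
    intro x y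
    have : (0:ℝ) ≤ dist x y / ((1 + dist x p) * (1 + dist y p)) :=
      div_nonneg dist_nonneg (le_of_lt (mul_pos (hD x) (hD y)))
    linarith
  have hApos : ∀ x y : X, (0:ℝ) < 1 + dist x y / ((1 + dist x p) * (1 + dist y p)) :=
    fun x y => lt_of_lt_of_le one_pos (hA1 x y)
  have hAform : ∀ x y : X,
      1 + dist x y / ((1 + dist x p) * (1 + dist y p)) =
      ((1 + dist x p) * (1 + dist y p) + dist x y) / ((1 + dist x p) * (1 + dist y p)) := by
    intro x y
    field_simp
  refine ⟨?_, ?_, ?_, ?_, ?_⟩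
  · intro x y
    exact Real.log_nonneg (hA1 x y)
  · intro x y
    constructor
    · intro h
      have h2 : (1:ℝ) + dist x y / ((1 + dist x p) * (1 + dist y p)) = 1 := by
        have hl : Real.log (1 + dist x y / ((1 + dist x p) * (1 + dist y p))) = 0 := h
        have := Real.exp_log (hApos x y)
        rw [hl] at this
        simpa using this.symm
      have h3 : dist x y / ((1 + dist x p) * (1 + dist y p)) = 0 := by linarith
      have h4 : dist x y = 0 := by
        rcases div_eq_zero_iff.mp h3 with h | h
        · exact h
        · exact absurd h (ne_of_gt (mul_pos (hD x) (hD y)))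
      exact dist_eq_zero.mp h4
    · intro h
      subst h
      simp [S]
  · intro x y
    simp only [S, dist_comm x y, mul_comm (1 + dist x p) (1 + dist y p)]
  · intro x y z
    have key : (1 + dist x z / ((1 + dist x p) * (1 + dist z p))) ≤
        (1 + dist x y / ((1 + dist x p) * (1 + dist y p))) *
        (1 + dist y z / ((1 + dist y p) * (1 + dist z p))) := by
      rw [hAform, hAform, hAform, div_mul_div_comm,
        div_le_div_iff₀ (mul_pos (hD x) (hD z)) (mul_pos (mul_pos (hD x) (hD y)) (mul_pos (hD y) (hD z)))]
      have hP : dist y p * dist x z ≤ dist x p * dist y z + dist z p * dist x y := by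
        have := hPt x z y p
        calc dist y p * dist x z = dist x z * dist y p := by ring
          _ ≤ dist x p * dist z y + dist x y * dist z p := this
          _ = dist x p * dist y z + dist z p * dist x y := by rw [dist_comm z y]; ring
      have hc := core_tri (dist x p) (dist y p) (dist z p) (dist x y) (dist y z) (dist x z)
        dist_nonneg dist_nonneg dist_nonneg dist_nonneg dist_nonneg dist_nonneg
        hP (dist_triangle x y z)
      have hc2 := mul_le_mul_of_nonneg_right hc (le_of_lt (mul_pos (hD x) (hD z)))
      calc ((1 + dist x p) * (1 + dist z p) + dist x z) *
            ((1 + dist x p) * (1 + dist y p) * ((1 + dist y p) * (1 + dist z p)))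
          = ((1 + dist x p) * (1 + dist z p) + dist x z) *
            ((1 + dist y p) * (1 + dist y p)) * ((1 + dist x p) * (1 + dist z p)) := by ring
        _ ≤ ((1 + dist x p) * (1 + dist y p) + dist x y) *
            ((1 + dist y p) * (1 + dist z p) + dist y z) * ((1 + dist x p) * (1 + dist z p)) := hc2
    calc S x z = Real.log (1 + dist x z / ((1 + dist x p) * (1 + dist z p))) := rfl
      _ ≤ Real.log ((1 + dist x y / ((1 + dist x p) * (1 + dist y p))) *
          (1 + dist y z / ((1 + dist y p) * (1 + dist z p)))) :=
            Real.log_le_log (hApos x z) key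
      _ = S x y + S y z := Real.log_mul (ne_of_gt (hApos x y)) (ne_of_gt (hApos y z))
  · intro x y z t
    simp only [S, Real.exp_add, Real.exp_log (hApos _ _)]
    have hform : ∀ u v : X,
        (1 + dist u v / ((1 + dist u p) * (1 + dist v p))) =
        ((1 + dist u p) * (1 + dist v p) + dist u v) / ((1 + dist u p) * (1 + dist v p)) :=
      hAform
    rw [hform x y, hform z t, hform x z, hform y t, hform x t, hform z y]
    set a := dist x p
    set b := dist y p
    set c := dist z p
    set e := dist t p
    have hP : (0:ℝ) < (1+a)*(1+b)*((1+c)*(1+e)) :=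
      mul_pos (mul_pos (hD x) (hD y)) (mul_pos (hD z) (hD t))
    have e1 : ((1+a)*(1+b) + dist x y) / ((1+a)*(1+b)) * (((1+c)*(1+e) + dist z t) / ((1+c)*(1+e)))
        = ((1+a)*(1+b) + dist x y) * ((1+c)*(1+e) + dist z t) / ((1+a)*(1+b)*((1+c)*(1+e))) := by
      rw [div_mul_div_comm]
    have e2 : ((1+a)*(1+c) + dist x z) / ((1+a)*(1+c)) * (((1+b)*(1+e) + dist y t) / ((1+b)*(1+e)))
        = ((1+a)*(1+c) + dist x z) * ((1+b)*(1+e) + dist y t) / ((1+a)*(1+b)*((1+c)*(1+e))) := by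
      rw [div_mul_div_comm]; congr 1; ring
    have e3 : ((1+a)*(1+e) + dist x t) / ((1+a)*(1+e)) * (((1+c)*(1+b) + dist z y) / ((1+c)*(1+b)))
        = ((1+a)*(1+e) + dist x t) * ((1+c)*(1+b) + dist z y) / ((1+a)*(1+b)*((1+c)*(1+e))) := by
      rw [div_mul_div_comm]; congr 1; ring
    rw [e1, e2, e3, ← add_div, div_le_div_iff₀ hP hP]
    have key := core_hyp a b c e (dist x y) (dist z t) (dist x z) (dist y t) (dist x t) (dist z y)
      dist_nonneg dist_nonneg dist_nonneg dist_nonneg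
      dist_nonneg dist_nonneg dist_nonneg dist_nonneg
      (by calc dist z t ≤ dist z p + dist p t := dist_triangle z p t
            _ = c + e := by rw [dist_comm p t])
      (by calc dist x y ≤ dist x p + dist p y := dist_triangle x p y
            _ = a + b := by rw [dist_comm p y])
      (by calc dist z t ≤ dist z y + dist y t := dist_triangle z y t)
      (by calc dist z t ≤ dist z x + dist x t := dist_triangle z x t
            _ = dist x z + dist x t := by rw [dist_comm z x])
      (by calc dist x y ≤ dist x t + dist t y := dist_triangle x t y
            _ = dist x t + dist y t := by rw [dist_comm t y])
      (by calc dist x y ≤ dist x z + dist z y := dist_triangle x z y)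
      (by have := hPt x y z t
          calc dist x y * dist z t ≤ dist x t * dist y z + dist x z * dist y t := this
            _ = dist x t * dist z y + dist x z * dist y t := by rw [dist_comm y z])
    exact mul_le_mul_of_nonneg_right key (le_of_lt hP)
end

section
/- If (X,d) is a Ptolemy metric space and p ∈ X, then χ_p(x,y) = log(1 + d(x,y)/(d(p,x)·d(p,y))) defines a metric on X \ {p}. -/
theorem stmt10 {X : Type*} [MetricSpace X]
    (hPt : ∀ x1 x2 x3 x4 : X,
      dist x1 x2 * dist x3 x4 ≤ dist x1 x4 * dist x2 x3 + dist x1 x3 * dist x2 x4)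
    (p : X) :
    let χ : X → X → ℝ := fun x y => Real.log (1 + dist x y / (dist p x * dist p y))
    (∀ x y : X, x ≠ p → y ≠ p → 0 ≤ χ x y) ∧
    (∀ x y : X, x ≠ p → y ≠ p → (χ x y = 0 ↔ x = y)) ∧
    (∀ x y : X, x ≠ p → y ≠ p → χ x y = χ y x) ∧
    (∀ x y z : X, x ≠ p → y ≠ p → z ≠ p → χ x z ≤ χ x y + χ y z) := by
  intro χ
  have hd : ∀ x : X, x ≠ p → 0 < dist p x := by
    intro x hx
    exact dist_pos.mpr (Ne.symm hx)
  have harg : ∀ x y : X, x ≠ p → y ≠ p →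
      1 ≤ 1 + dist x y / (dist p x * dist p y) := by
    intro x y hx hy
    have : 0 ≤ dist x y / (dist p x * dist p y) :=
      div_nonneg dist_nonneg (le_of_lt (mul_pos (hd x hx) (hd y hy)))
    linarith
  refine ⟨?_, ?_, ?_, ?_⟩
  · intro x y hx hy
    exact Real.log_nonneg (harg x y hx hy)
  · intro x y hx hy
    have hab := mul_pos (hd x hx) (hd y hy)
    constructor
    · intro h
      have h1 : (1 : ℝ) + dist x y / (dist p x * dist p y) = 1 := by
        have := Real.log_eq_zero.mp h
        rcases this with h' | h' | h'
        · linarith [harg x y hx hy]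
        · exact h'
        · linarith [harg x y hx hy]
      have : dist x y / (dist p x * dist p y) = 0 := by linarith
      have : dist x y = 0 := by
        rcases div_eq_zero_iff.mp this with h' | h'
        · exact h'
        · exact absurd h' (ne_of_gt hab)
      exact dist_eq_zero.mp this
    · intro h
      subst h
      simp [χ]
  · intro x y hx hy
    simp only [χ, dist_comm x y, mul_comm (dist p x) (dist p y)]
  · intro x y z hx hy hz
    have ha := hd x hx
    have hb := hd y hy
    have hc := hd z hz
    have hpos1 : (0:ℝ) < 1 + dist x y / (dist p x * dist p y) := by
      linarith [harg x y hx hy]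
    have hpos2 : (0:ℝ) < 1 + dist y z / (dist p y * dist p z) := by
      linarith [harg y z hy hz]
    have key : 1 + dist x z / (dist p x * dist p z) ≤
        (1 + dist x y / (dist p x * dist p y)) *
        (1 + dist y z / (dist p y * dist p z)) := by
      have hPtol := hPt x z y p
      -- dist x z * dist y p ≤ dist x p * dist z y + dist x y * dist z p
      rw [dist_comm y p, dist_comm x p, dist_comm z y, dist_comm z p] at hPtol
      field_simp
      nlinarith [dist_nonneg (x := x) (y := y), dist_nonneg (x := y) (y := z),
        dist_nonneg (x := x) (y := z), mul_pos ha hb, mul_pos hb hc,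
        mul_pos ha hc, mul_nonneg (dist_nonneg (x := x) (y := y)) (dist_nonneg (x := y) (y := z)),
        mul_le_mul_of_nonneg_left hPtol (le_of_lt hb)]
    calc χ x z = Real.log (1 + dist x z / (dist p x * dist p z)) := rfl
      _ ≤ Real.log ((1 + dist x y / (dist p x * dist p y)) *
            (1 + dist y z / (dist p y * dist p z))) := by
          apply Real.log_le_log (by linarith [harg x z hx hz]) key
      _ = χ x y + χ y z := Real.log_mul (ne_of_gt hpos1) (ne_of_gt hpos2)
end

section
/- If (X,d) is a Ptolemy metric space and x0, x1, x2, x3, x4 ∈ X, then with p_i = d(x0,x_i) and d_{ij} = d(x_i,x_j), we have p3·p4·d12 + p1·p2·d34 ≤ p1·p3·d24 + p2·p4·d13 + p2·p3·d14 + p1·p4·d23. -/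
theorem stmt11 {X : Type*} [MetricSpace X]
    (hPt : ∀ x1 x2 x3 x4 : X,
      dist x1 x2 * dist x3 x4 ≤ dist x1 x4 * dist x2 x3 + dist x1 x3 * dist x2 x4)
    (x0 x1 x2 x3 x4 : X) :
    dist x0 x3 * dist x0 x4 * dist x1 x2 + dist x0 x1 * dist x0 x2 * dist x3 x4 ≤
      dist x0 x1 * dist x0 x3 * dist x2 x4 + dist x0 x2 * dist x0 x4 * dist x1 x3 +
      dist x0 x2 * dist x0 x3 * dist x1 x4 + dist x0 x1 * dist x0 x4 * dist x2 x3 := by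
  have h1 := hPt x1 x2 x0 x3
  have h2 := hPt x1 x2 x0 x4
  have h3 := hPt x3 x4 x0 x2
  have h4 := hPt x3 x4 x0 x1
  simp only [dist_comm x1 x0, dist_comm x2 x0, dist_comm x3 x0, dist_comm x4 x0,
    dist_comm x2 x1, dist_comm x3 x1, dist_comm x4 x1, dist_comm x3 x2,
    dist_comm x4 x2, dist_comm x4 x3] at *
  have m1 := mul_le_mul_of_nonneg_left h1 (dist_nonneg (x := x0) (y := x4))
  have m2 := mul_le_mul_of_nonneg_left h2 (dist_nonneg (x := x0) (y := x3))
  have m3 := mul_le_mul_of_nonneg_left h3 (dist_nonneg (x := x0) (y := x1))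
  have m4 := mul_le_mul_of_nonneg_left h4 (dist_nonneg (x := x0) (y := x2))
  nlinarith [m1, m2, m3, m4]
end

section
/- If (X,d) is a Ptolemy metric space, p ∈ X, and x1, x2, x3, x4 ∈ X \ {p}, then with p_i = d(p,x_i) and d_{ij} = d(x_i,x_j): p3·p4·d12 + p1·p2·d34 + d12·d34 ≤ p2·p4·d13 + p1·p3·d24 + d13·d24 + p2·p3·d14 + p1·p4·d23 + d14·d23 + p1·p2·p3·p4. -/
theorem stmt12 {X : Type*} [MetricSpace X]
    (hPt : ∀ x1 x2 x3 x4 : X,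
      dist x1 x2 * dist x3 x4 ≤ dist x1 x4 * dist x2 x3 + dist x1 x3 * dist x2 x4)
    (p x1 x2 x3 x4 : X) (h1 : x1 ≠ p) (h2 : x2 ≠ p) (h3 : x3 ≠ p) (h4 : x4 ≠ p) :
    dist p x3 * dist p x4 * dist x1 x2 + dist p x1 * dist p x2 * dist x3 x4 +
        dist x1 x2 * dist x3 x4 ≤
      dist p x2 * dist p x4 * dist x1 x3 + dist p x1 * dist p x3 * dist x2 x4 +
        dist x1 x3 * dist x2 x4 +
      dist p x2 * dist p x3 * dist x1 x4 + dist p x1 * dist p x4 * dist x2 x3 +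
        dist x1 x4 * dist x2 x3 +
      dist p x1 * dist p x2 * dist p x3 * dist p x4 := by
  have hA := hPt x1 x2 x3 x4
  have hB := hPt x1 x2 x3 p
  have hC := hPt x1 x2 x4 p
  have hD := hPt x3 x4 x1 p
  have hE := hPt x3 x4 x2 p
  rw [dist_comm x3 p, dist_comm x1 p, dist_comm x2 p] at hB
  rw [dist_comm x4 p, dist_comm x1 p, dist_comm x2 p] at hC
  rw [dist_comm x1 p, dist_comm x3 p, dist_comm x4 p, dist_comm x4 x1, dist_comm x3 x1] at hD
  rw [dist_comm x2 p, dist_comm x3 p, dist_comm x4 p, dist_comm x4 x2, dist_comm x3 x2] at hE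
  have n1 : (0:ℝ) ≤ dist p x1 := dist_nonneg
  have n2 : (0:ℝ) ≤ dist p x2 := dist_nonneg
  have n3 : (0:ℝ) ≤ dist p x3 := dist_nonneg
  have n4 : (0:ℝ) ≤ dist p x4 := dist_nonneg
  have np : (0:ℝ) ≤ dist p x1 * dist p x2 * dist p x3 * dist p x4 := by positivity
  nlinarith [mul_le_mul_of_nonneg_right hB n4, mul_le_mul_of_nonneg_right hC n3,
    mul_le_mul_of_nonneg_right hD n2, mul_le_mul_of_nonneg_right hE n1, hA, np]
end

section
/- If (X,d) is a Ptolemy metric space and p ∈ X, then the metric χ_p(x,y) = log(1 + d(x,y)/(d(p,x)·d(p,y))) on X \ {p} is strongly hyperbolic with parameter 2: exp(χ_p(x,y)+χ_p(z,t)) ≤ exp(χ_p(x,z)+χ_p(y,t)) + exp(χ_p(x,t)+χ_p(z,y)) for all x,y,z,t ∈ X \ {p}. -/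
theorem stmt13 {X : Type*} [MetricSpace X]
    (hPt : ∀ x1 x2 x3 x4 : X,
      dist x1 x2 * dist x3 x4 ≤ dist x1 x4 * dist x2 x3 + dist x1 x3 * dist x2 x4)
    (p : X) :
    let χ : X → X → ℝ := fun x y => Real.log (1 + dist x y / (dist p x * dist p y))
    ∀ x y z t : X, x ≠ p → y ≠ p → z ≠ p → t ≠ p →
      Real.exp (χ x y + χ z t) ≤ Real.exp (χ x z + χ y t) + Real.exp (χ x t + χ z y) := by
  intro χ x y z t hx hy hz ht
  have ha : (0:ℝ) < dist p x := dist_pos.2 (Ne.symm hx)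
  have hb : (0:ℝ) < dist p y := dist_pos.2 (Ne.symm hy)
  have hc : (0:ℝ) < dist p z := dist_pos.2 (Ne.symm hz)
  have hd : (0:ℝ) < dist p t := dist_pos.2 (Ne.symm ht)
  have key : ∀ u v : X, 0 < dist p u → 0 < dist p v →
      Real.exp (χ u v) = 1 + dist u v / (dist p u * dist p v) := by
    intro u v hu hv
    have hpos : (0:ℝ) < 1 + dist u v / (dist p u * dist p v) := by positivity
    exact Real.exp_log hpos
  rw [Real.exp_add, Real.exp_add, Real.exp_add, key x y ha hb, key z t hc hd,
    key x z ha hc, key y t hb hd, key x t ha hd, key z y hc hb]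
  set a := dist p x with hA
  set b := dist p y with hB
  set c := dist p z with hC
  set d := dist p t with hD
  have e1 : (1 + dist x y / (a * b)) * (1 + dist z t / (c * d))
      = ((a*b + dist x y) * (c*d + dist z t)) / (a*b*c*d) := by
    field_simp
  have e2 : (1 + dist x z / (a * c)) * (1 + dist y t / (b * d))
      = ((a*c + dist x z) * (b*d + dist y t)) / (a*b*c*d) := by
    field_simp
  have e3 : (1 + dist x t / (a * d)) * (1 + dist z y / (c * b))
      = ((a*d + dist x t) * (c*b + dist z y)) / (a*b*c*d) := by
    field_simp
  rw [e1, e2, e3, ← add_div, div_le_div_iff₀ (by positivity) (by positivity)]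
  have h0 := hPt x y z t
  have h1 := hPt x y z p
  have h2 := hPt x y t p
  have h3 := hPt z t x p
  have h4 := hPt z t y p
  simp only [dist_comm x p, dist_comm y p, dist_comm z p, dist_comm t p,
    dist_comm y x, dist_comm z x, dist_comm t x, dist_comm z y, dist_comm t y,
    dist_comm t z, ← hA, ← hB, ← hC, ← hD] at h0 h1 h2 h3 h4 ⊢
  nlinarith [mul_le_mul_of_nonneg_left h1 hd.le, mul_le_mul_of_nonneg_left h2 hc.le,
    mul_le_mul_of_nonneg_left h3 hb.le, mul_le_mul_of_nonneg_left h4 ha.le,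
    h0, mul_pos (mul_pos ha hb) (mul_pos hc hd),
    dist_nonneg (x := x) (y := y), dist_nonneg (x := z) (y := t)]
end

section
/- If (X,d) is a Ptolemy metric space and p ∈ X, then the metric χ_p(x,y) = log(1 + d(x,y)/(d(p,x)·d(p,y))) on X \ {p} is (log 2)/2-hyperbolic: (x|y)_o ≥ min{(x|z)_o, (z|y)_o} - (log 2)/2 for all x, y, z, o ∈ X \ {p}, where the Gromov product is taken with respect to χ_p. -/
lemma loglem14 {c u a w : ℝ} (hc : 0 ≤ c) (hu : 0 ≤ u) (ha : 0 ≤ a) (hw : 0 ≤ w)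
    (h : (1 + c) * (1 + u) ≤ 2 * ((1 + a) * (1 + w))) :
    Real.log (1 + c) + Real.log (1 + u) ≤ Real.log 2 + Real.log (1 + a) + Real.log (1 + w) := by
  have h1 : Real.log ((1 + c) * (1 + u)) ≤ Real.log (2 * ((1 + a) * (1 + w))) :=
    Real.log_le_log (by positivity) h
  rw [Real.log_mul (by positivity) (by positivity),
      Real.log_mul (by positivity) (by positivity),
      Real.log_mul (by positivity) (by positivity)] at h1
  linarith

theorem stmt14 {X : Type*} [MetricSpace X]
    (hPt : ∀ x1 x2 x3 x4 : X,
      dist x1 x2 * dist x3 x4 ≤ dist x1 x4 * dist x2 x3 + dist x1 x3 * dist x2 x4)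
    (p : X) :
    let χ : X → X → ℝ := fun x y => Real.log (1 + dist x y / (dist p x * dist p y))
    let gp : X → X → X → ℝ := fun o x y => (χ o x + χ o y - χ x y) / 2
    ∀ x y z o : X, x ≠ p → y ≠ p → z ≠ p → o ≠ p →
      gp o x y ≥ min (gp o x z) (gp o z y) - Real.log 2 / 2 := by
  intro χ gp x y z o hx hy hz ho
  have hpx : 0 < dist p x := dist_pos.mpr (Ne.symm hx)
  have hpy : 0 < dist p y := dist_pos.mpr (Ne.symm hy)
  have hpz : 0 < dist p z := dist_pos.mpr (Ne.symm hz)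
  have hpo : 0 < dist p o := dist_pos.mpr (Ne.symm ho)
  simp only [gp, χ]
  set a : ℝ := dist o x / (dist p o * dist p x) with ha_def
  set b : ℝ := dist o y / (dist p o * dist p y) with hb_def
  set c : ℝ := dist o z / (dist p o * dist p z) with hc_def
  set u : ℝ := dist x y / (dist p x * dist p y) with hu_def
  set v : ℝ := dist x z / (dist p x * dist p z) with hv_def
  set w : ℝ := dist z y / (dist p z * dist p y) with hw_def
  clear_value a b c u v w
  have ha0 : 0 ≤ a := by rw [ha_def]; positivity
  have hb0 : 0 ≤ b := by rw [hb_def]; positivity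
  have hc0 : 0 ≤ c := by rw [hc_def]; positivity
  have hu0 : 0 ≤ u := by rw [hu_def]; positivity
  have hv0 : 0 ≤ v := by rw [hv_def]; positivity
  have hw0 : 0 ≤ w := by rw [hw_def]; positivity
  -- triangle inequalities for ρ
  have t1 : c ≤ a + v := by
    have h := hPt o z p x
    rw [dist_comm z p, dist_comm o p, dist_comm z x] at h
    rw [hc_def, ha_def, hv_def,
      div_add_div _ _ (by positivity) (by positivity),
      div_le_div_iff₀ (by positivity) (by positivity)]
    nlinarith [mul_le_mul_of_nonneg_right h
      (by positivity : (0:ℝ) ≤ dist p o * dist p x * dist p z)]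
  have t2 : c ≤ b + w := by
    have h := hPt o z p y
    rw [dist_comm z p, dist_comm o p] at h
    rw [hc_def, hb_def, hw_def,
      div_add_div _ _ (by positivity) (by positivity),
      div_le_div_iff₀ (by positivity) (by positivity)]
    nlinarith [mul_le_mul_of_nonneg_right h
      (by positivity : (0:ℝ) ≤ dist p o * dist p y * dist p z)]
  have t3 : u ≤ v + w := by
    have h := hPt x y p z
    rw [dist_comm y p, dist_comm x p, dist_comm y z] at h
    rw [hu_def, hv_def, hw_def,
      div_add_div _ _ (by positivity) (by positivity),
      div_le_div_iff₀ (by positivity) (by positivity)]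
    nlinarith [mul_le_mul_of_nonneg_right h
      (by positivity : (0:ℝ) ≤ dist p x * dist p y * dist p z)]
  have t4 : u ≤ a + b := by
    have h := hPt x y p o
    rw [dist_comm y p, dist_comm x p, dist_comm x o, dist_comm y o] at h
    rw [hu_def, ha_def, hb_def,
      div_add_div _ _ (by positivity) (by positivity),
      div_le_div_iff₀ (by positivity) (by positivity)]
    nlinarith [mul_le_mul_of_nonneg_right h
      (by positivity : (0:ℝ) ≤ dist p x * dist p y * dist p o)]
  -- Ptolemy inequality for ρ
  have pt : u * c ≤ v * b + w * a := by
    have h := hPt x y z o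
    rw [dist_comm z o, dist_comm y z, dist_comm x o, dist_comm y o] at h
    rw [hu_def, hc_def, hv_def, hb_def, hw_def, ha_def,
      div_mul_div_comm, div_mul_div_comm, div_mul_div_comm,
      div_add_div _ _ (by positivity) (by positivity),
      div_le_div_iff₀ (by positivity) (by positivity)]
    nlinarith [mul_le_mul_of_nonneg_right h
      (by positivity : (0:ℝ) ≤ (dist p x * dist p y * dist p o * dist p z) *
        (dist p x * dist p y * dist p o * dist p z))]
  -- key inequality
  have key : (1 + c) * (1 + u) ≤ (1 + b) * (1 + v) + (1 + a) * (1 + w) := by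
    rcases le_total v b with h | h
    · nlinarith [t1, t3, pt]
    · nlinarith [t2, t4, pt]
  rcases le_total ((1 + a) * (1 + w)) ((1 + b) * (1 + v)) with h | h
  · have k : (1 + c) * (1 + u) ≤ 2 * ((1 + b) * (1 + v)) := by linarith
    have L := loglem14 hc0 hu0 hb0 hv0 k
    have m := min_le_left ((Real.log (1 + a) + Real.log (1 + c) - Real.log (1 + v)) / 2)
      ((Real.log (1 + c) + Real.log (1 + b) - Real.log (1 + w)) / 2)
    linarith
  · have k : (1 + c) * (1 + u) ≤ 2 * ((1 + a) * (1 + w)) := by linarith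
    have L := loglem14 hc0 hu0 ha0 hw0 k
    have m := min_le_right ((Real.log (1 + a) + Real.log (1 + c) - Real.log (1 + v)) / 2)
      ((Real.log (1 + c) + Real.log (1 + b) - Real.log (1 + w)) / 2)
    linarith
end

section
/- Let a ∈ Bⁿ (the open unit ball in ℝⁿ) and let f : Bⁿ \ {0} → Bⁿ \ {a} be a Möbius map of the unit ball with f(0) = a. Then for all x, y ∈ Bⁿ \ {0}: χ_0(x,y) ≤ χ_a(f(x),f(y)) ≤ χ_0(x,y) - log(1 - |a|²), where χ_p(u,v) = log(1 + |u-v|/(|u-p||v-p|)). Equality holds in both inequalities if and only if a = 0. -/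
open EuclideanGeometry Metric Set
open scoped RealInnerProductSpace
set_option linter.unusedSectionVars false

variable {E : Type*} [NormedAddCommGroup E] [InnerProductSpace ℝ E]

/-- relay function -/
noncomputable def relayF (S : Set E) (u v : E) : ℝ :=
  sInf ((fun w => max (dist u w) (dist w v)) '' S)

/-- gap set -/
def gapSet (S : Set E) : Set ℝ :=
  {r | ∃ u ∈ S, ∃ v ∈ S, r = 2 * relayF S u v - dist u v}

noncomputable def gapD (S : Set E) : ℝ := sSup (gapSet S)

lemma relayF_le {S : Set E} {u v w : E} (hw : w ∈ S)
    {b : ℝ} (h1 : dist u w ≤ b) (h2 : dist w v ≤ b) : relayF S u v ≤ b := by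
  refine csInf_le_of_le ?_ (Set.mem_image_of_mem _ hw) (max_le h1 h2)
  exact ⟨0, fun r hr => by
    obtain ⟨w', _, rfl⟩ := hr
    exact le_max_iff.2 (Or.inl dist_nonneg)⟩

lemma le_relayF {S : Set E} (hS : S.Nonempty) {u v : E} {b : ℝ}
    (h : ∀ w ∈ S, b ≤ max (dist u w) (dist w v)) : b ≤ relayF S u v :=
  le_csInf (hS.image _) (by rintro r ⟨w, hw, rfl⟩; exact h w hw)

/-- transport of relayF under a c-similarity bijection -/
lemma relayF_map {S T : Set E} (hS : S.Nonempty) {g : E → E} (hg : Set.BijOn g S T)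
    {c : ℝ} (hc : 0 < c) (hd : ∀ u ∈ S, ∀ v ∈ S, dist (g u) (g v) = c * dist u v)
    {u v : E} (hu : u ∈ S) (hv : v ∈ S) :
    relayF T (g u) (g v) = c * relayF S u v := by
  have himg : (fun w => max (dist (g u) w) (dist w (g v))) '' T
      = (fun r => c * r) '' ((fun w => max (dist u w) (dist w v)) '' S) := by
    rw [← hg.image_eq, Set.image_image, Set.image_image]
    refine Set.image_congr fun w hw => ?_
    rw [hd u hu w hw, hd w hw v hv, mul_max_of_nonneg _ _ hc.le]
  rw [relayF, himg, relayF]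
  have hmono : Monotone (fun r : ℝ => c * r) := fun a b hab => mul_le_mul_of_nonneg_left hab hc.le
  rw [← Monotone.map_csInf_of_continuousAt (by fun_prop) hmono (hS.image _)
    ⟨0, by rintro r ⟨w, _, rfl⟩; exact le_max_iff.2 (Or.inl dist_nonneg)⟩]

lemma gapSet_map {S T : Set E} (hS : S.Nonempty) {g : E → E} (hg : Set.BijOn g S T)
    {c : ℝ} (hc : 0 < c) (hd : ∀ u ∈ S, ∀ v ∈ S, dist (g u) (g v) = c * dist u v) :
    gapSet T = (fun r => c * r) '' gapSet S := by
  ext r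
  constructor
  · rintro ⟨u, hu, v, hv, rfl⟩
    obtain ⟨u', hu', rfl⟩ := hg.surjOn hu
    obtain ⟨v', hv', rfl⟩ := hg.surjOn hv
    exact ⟨2 * relayF S u' v' - dist u' v', ⟨u', hu', v', hv', rfl⟩, by
      rw [relayF_map hS hg hc hd hu' hv', hd u' hu' v' hv']; ring⟩
  · rintro ⟨r', ⟨u, hu, v, hv, rfl⟩, rfl⟩
    exact ⟨g u, hg.mapsTo hu, g v, hg.mapsTo hv, by
      rw [relayF_map hS hg hc hd hu hv, hd u hu v hv]; ring⟩

lemma gapD_map {S T : Set E} (hS : S.Nonempty) {g : E → E} (hg : Set.BijOn g S T)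
    {c : ℝ} (hc : 0 < c) (hd : ∀ u ∈ S, ∀ v ∈ S, dist (g u) (g v) = c * dist u v)
    (hbdd : BddAbove (gapSet S)) :
    gapD T = c * gapD S := by
  have hne : (gapSet S).Nonempty := by
    obtain ⟨u, hu⟩ := hS
    exact ⟨2 * relayF S u u - dist u u, u, hu, u, hu, rfl⟩
  have hmono : Monotone (fun r : ℝ => c * r) := fun a b hab => mul_le_mul_of_nonneg_left hab hc.le
  rw [gapD, gapSet_map hS hg hc hd,
    ← Monotone.map_csSup_of_continuousAt (by fun_prop) hmono hne hbdd, gapD]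
set_option linter.unusedSectionVars false

variable {E : Type*} [NormedAddCommGroup E] [InnerProductSpace ℝ E]

lemma mem_ext_iff {z w : E} {r : ℝ} : w ∈ (closedBall z r)ᶜ ↔ r < dist w z := by
  simp [Metric.mem_closedBall, not_le]

lemma ext_nonempty {z : E} {r : ℝ} (hr : 0 < r) {e : E} (he : ‖e‖ = 1) :
    ((closedBall z r)ᶜ : Set E).Nonempty := by
  refine ⟨z + (2 * r) • e, mem_ext_iff.2 ?_⟩
  rw [dist_eq_norm, add_sub_cancel_left, norm_smul, he]
  simp only [mul_one, Real.norm_eq_abs]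
  rw [abs_of_pos (by linarith)]; linarith

lemma gapSet_bddAbove {z : E} {r : ℝ} (hr : 0 < r) {e : E} (he : ‖e‖ = 1) :
    BddAbove (gapSet ((closedBall z r)ᶜ : Set E)) := by
  refine ⟨4 * r, ?_⟩
  rintro x ⟨u, hu, v, hv, rfl⟩
  classical
  set p := midpoint ℝ u v with hp
  have hdup : dist u p = dist u v / 2 := by
    rw [hp, dist_comm, dist_midpoint_left]; norm_num; ring
  have hdpv : dist p v = dist u v / 2 := by
    rw [hp, dist_midpoint_right]; norm_num; ring
  by_cases hpz : r < dist p z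
  · have : relayF ((closedBall z r)ᶜ) u v ≤ dist u v / 2 :=
      relayF_le (mem_ext_iff.2 hpz) hdup.le hdpv.le
    nlinarith
  · -- midpoint inside the closed ball; move out by 2r in a direction away from z
    push_neg at hpz
    set e' : E := if h : p = z then e else ‖p - z‖⁻¹ • (p - z) with he'
    have hne' : ‖e'‖ = 1 := by
      rw [he']
      split_ifs with h
      · exact he
      · rw [norm_smul, norm_inv, norm_norm, inv_mul_cancel₀ (by
          simpa [sub_eq_zero] using h)]
    have hinner : 0 ≤ ⟪p - z, e'⟫ := by
      rw [he']
      split_ifs with h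
      · simp [h]
      · rw [real_inner_smul_right, real_inner_self_eq_norm_sq]
        positivity
    set w : E := p + (2 * r) • e' with hw
    have hwz : r < dist w z := by
      have hsq : dist w z ^ 2 = ‖p - z‖ ^ 2 + 2 * (2 * r) * ⟪p - z, e'⟫ + (2 * r) ^ 2 := by
        rw [dist_eq_norm, hw]
        have : p + (2 * r) • e' - z = (p - z) + (2 * r) • e' := by abel
        rw [this, norm_add_sq_real, real_inner_smul_right, norm_smul, Real.norm_eq_abs,
          abs_of_pos (by linarith : (0:ℝ) < 2 * r), hne']
        ring
      nlinarith [dist_nonneg (x := w) (y := z), norm_nonneg (p - z)]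
    have hpw : dist p w = 2 * r := by
      rw [hw, dist_eq_norm]
      simp only [sub_add_cancel_left, norm_neg]
      rw [norm_smul, hne', Real.norm_eq_abs, abs_of_pos (by linarith : (0:ℝ) < 2*r)]
      ring
    have hduw : dist u w ≤ dist u v / 2 + 2 * r := by
      calc dist u w ≤ dist u p + dist p w := dist_triangle _ _ _
        _ = dist u v / 2 + 2 * r := by rw [hdup, hpw]
    have hdwv : dist w v ≤ dist u v / 2 + 2 * r := by
      calc dist w v ≤ dist w p + dist p v := dist_triangle _ _ _
        _ = dist u v / 2 + 2 * r := by rw [dist_comm w p, hdpv, hpw]; ring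
    have : relayF ((closedBall z r)ᶜ) u v ≤ dist u v / 2 + 2 * r :=
      relayF_le (mem_ext_iff.2 hwz) hduw hdwv
    nlinarith

lemma gapD_lower {z : E} {r : ℝ} (hr : 0 < r) {e : E} (he : ‖e‖ = 1) :
    2 * r / 5 ≤ gapD ((closedBall z r)ᶜ : Set E) := by
  set u : E := z - (2 * r) • e with hu
  set v : E := z + (2 * r) • e with hv
  have h2r : ‖(2 * r) • e‖ = 2 * r := by
    rw [norm_smul, he, Real.norm_eq_abs, abs_of_pos (by linarith)]; ring
  have huS : u ∈ ((closedBall z r)ᶜ : Set E) := by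
    rw [mem_ext_iff, dist_eq_norm, hu]
    simp only [sub_sub_cancel_left, norm_neg]
    rw [h2r]; linarith
  have hvS : v ∈ ((closedBall z r)ᶜ : Set E) := by
    rw [mem_ext_iff, dist_eq_norm, hv, add_sub_cancel_left, h2r]; linarith
  have hduv : dist u v = 4 * r := by
    rw [dist_eq_norm, hu, hv]
    have : z - (2 * r) • e - (z + (2 * r) • e) = -((4 * r) • e) := by
      rw [show (4*r:ℝ) = 2*r + 2*r by ring, add_smul]; abel
    rw [this, norm_neg, norm_smul, he, Real.norm_eq_abs, abs_of_pos (by linarith)]; ring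
  have hrelay : 11 * r / 5 ≤ relayF ((closedBall z r)ᶜ) u v := by
    refine le_relayF ⟨u, huS⟩ fun w hw => ?_
    by_contra hcon
    push_neg at hcon
    have h1 : dist u w < 11 * r / 5 := lt_of_le_of_lt (le_max_left _ _) hcon
    have h2 : dist w v < 11 * r / 5 := lt_of_le_of_lt (le_max_right _ _) hcon
    have hwz : r < ‖w - z‖ := by rw [← dist_eq_norm]; exact mem_ext_iff.1 hw
    have e1 : ‖(w - z) + (2*r) • e‖ < 11 * r / 5 := by
      rw [show (w - z) + (2*r) • e = w - u by rw [hu]; abel, ← dist_eq_norm, dist_comm]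
      exact h1
    have e2 : ‖(w - z) - (2*r) • e‖ < 11 * r / 5 := by
      rw [show (w - z) - (2*r) • e = w - v by rw [hv]; abel, ← dist_eq_norm]
      exact h2
    have hpar : ‖(w - z) + (2*r) • e‖ ^ 2 + ‖(w - z) - (2*r) • e‖ ^ 2
        = 2 * ‖w - z‖ ^ 2 + 2 * ‖(2*r) • e‖ ^ 2 := by
      have := parallelogram_law_with_norm ℝ (w - z) ((2*r) • e)
      nlinarith [this]
    rw [h2r] at hpar
    nlinarith [norm_nonneg ((w - z) + (2*r) • e), norm_nonneg ((w - z) - (2*r) • e)]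
  have hmem : 2 * relayF ((closedBall z r)ᶜ) u v - dist u v
      ∈ gapSet ((closedBall z r)ᶜ : Set E) := ⟨u, huS, v, hvS, rfl⟩
  calc 2 * r / 5 ≤ 2 * relayF ((closedBall z r)ᶜ) u v - dist u v := by
        rw [hduv]; linarith
    _ ≤ gapD ((closedBall z r)ᶜ) := le_csSup (gapSet_bddAbove hr he) hmem
lemma sim_bijOn {r : ℝ} (hr : 0 < r) (z : E) :
    Set.BijOn (fun x => z + r • x) ((closedBall (0:E) 1)ᶜ) ((closedBall z r)ᶜ) := by
  have hmem : ∀ x : E, (z + r • x) ∈ ((closedBall z r)ᶜ : Set E) ↔ x ∈ ((closedBall (0:E) 1)ᶜ : Set E) := by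
    intro x
    rw [mem_ext_iff, mem_ext_iff, dist_eq_norm, add_sub_cancel_left, norm_smul,
      Real.norm_eq_abs, abs_of_pos hr, dist_zero_right]
    constructor
    · intro h; nlinarith [norm_nonneg x]
    · intro h; nlinarith
  refine ⟨fun x hx => (hmem x).2 hx, fun x _ y _ hxy => ?_, fun w hw => ?_⟩
  · have : r • x = r • y := by
      have := hxy
      simpa using this
    exact smul_right_injective E hr.ne' this
  · refine ⟨r⁻¹ • (w - z), ?_, by simp [smul_smul, mul_inv_cancel₀ hr.ne']⟩
    have : z + r • (r⁻¹ • (w - z)) = w := by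
      rw [smul_smul, mul_inv_cancel₀ hr.ne', one_smul]; abel
    rw [← hmem]
    rwa [this]

lemma sim_dist {r : ℝ} (hr : 0 < r) (z u v : E) :
    dist (z + r • u) (z + r • v) = r * dist u v := by
  rw [dist_eq_norm, dist_eq_norm]
  have : z + r • u - (z + r • v) = r • (u - v) := by
    rw [smul_sub]; abel
  rw [this, norm_smul, Real.norm_eq_abs, abs_of_pos hr]

lemma inv_unit_mapsTo_ball :
    Set.MapsTo (inversion (0:E) 1) ((closedBall (0:E) 1)ᶜ) (ball 0 1 \ {0}) := by
  intro x hx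
  rw [mem_ext_iff] at hx
  have hx0 : x ≠ 0 := by
    intro h; rw [h] at hx; simp at hx; linarith
  constructor
  · rw [Metric.mem_ball, dist_inversion_center, one_pow]
    rw [div_lt_one (by linarith)]; linarith
  · simp only [Set.mem_singleton_iff]
    rw [inversion_eq_center one_ne_zero]
    exact hx0

lemma inv_unit_mapsTo_ext :
    Set.MapsTo (inversion (0:E) 1) (ball 0 1 \ {0}) ((closedBall (0:E) 1)ᶜ) := by
  rintro x ⟨hx1, hx0⟩
  rw [Metric.mem_ball] at hx1
  have hx0' : (0:ℝ) < dist x 0 := dist_pos.2 (by simpa using hx0)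
  rw [mem_ext_iff, dist_inversion_center, one_pow, lt_div_iff₀ hx0', one_mul]
  linarith

lemma inv_unit_bijOn :
    Set.BijOn (inversion (0:E) 1) ((closedBall (0:E) 1)ᶜ) (ball 0 1 \ {0}) := by
  refine Set.InvOn.bijOn ⟨fun x _ => inversion_inversion 0 one_ne_zero x,
    fun x _ => inversion_inversion 0 one_ne_zero x⟩ inv_unit_mapsTo_ball inv_unit_mapsTo_ext

lemma inva_mem_iff {a x : E} (ha : ‖a‖ < 1) (hx : x ≠ a) :
    (‖x‖ < 1 ↔ inversion a 1 x ∈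
      ((closedBall (a + (1-‖a‖^2)⁻¹ • a) ((1-‖a‖^2)⁻¹))ᶜ : Set E)) := by
  set lam : ℝ := 1 - ‖a‖^2 with hlam
  have hlam0 : 0 < lam := by nlinarith [norm_nonneg a]
  have hs : (0:ℝ) < ‖x - a‖ := by
    rw [norm_pos_iff, sub_ne_zero]; exact hx
  have hform : inversion a 1 x - (a + lam⁻¹ • a)
      = (‖x - a‖^2)⁻¹ • (x - a) - lam⁻¹ • a := by
    rw [inversion]
    simp only [vsub_eq_sub, vadd_eq_add, dist_eq_norm, one_div, div_pow, one_pow, inv_pow]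
    module
  have hinner : 2 * ⟪x - a, a⟫ = ‖x‖^2 - ‖a‖^2 - ‖x - a‖^2 := by
    have := norm_add_sq_real (x - a) a
    rw [sub_add_cancel] at this
    linarith
  have hkey : dist (inversion a 1 x) (a + lam⁻¹ • a) ^ 2 - (lam⁻¹)^2
      = (1 - ‖x‖^2) / (lam * ‖x - a‖^2) := by
    rw [dist_eq_norm, hform, norm_sub_sq_real, real_inner_smul_left, real_inner_smul_right,
      norm_smul, norm_smul, Real.norm_eq_abs, Real.norm_eq_abs,
      abs_of_pos (by positivity : (0:ℝ) < (‖x - a‖^2)⁻¹), abs_of_pos (by positivity)]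
    have hI : ⟪x - a, a⟫ = (‖x‖^2 - ‖a‖^2 - ‖x - a‖^2)/2 := by linarith
    rw [hI]
    field_simp
    ring
  rw [mem_ext_iff]
  constructor
  · intro h
    have hN : 0 < 1 - ‖x‖^2 := by nlinarith [norm_nonneg x]
    have h1 : 0 < dist (inversion a 1 x) (a + lam⁻¹ • a) ^ 2 - (lam⁻¹)^2 := by
      rw [hkey]; positivity
    nlinarith [dist_nonneg (x := inversion a 1 x) (y := a + lam⁻¹ • a),
      inv_pos.2 hlam0]
  · intro h
    have h1 : 0 < dist (inversion a 1 x) (a + lam⁻¹ • a) ^ 2 - (lam⁻¹)^2 := by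
      nlinarith [inv_pos.2 hlam0, dist_nonneg (x := inversion a 1 x) (y := a + lam⁻¹ • a)]
    rw [hkey] at h1
    have hden : 0 < lam * ‖x - a‖^2 := by positivity
    have hnum : 0 < 1 - ‖x‖^2 := by
      rcases div_pos_iff.1 h1 with ⟨h2, _⟩ | ⟨_, h3⟩
      · exact h2
      · linarith
    nlinarith [norm_nonneg x]

lemma inva_bijOn {a : E} (ha : ‖a‖ < 1) :
    Set.BijOn (inversion a 1) (ball 0 1 \ {a})
      ((closedBall (a + (1-‖a‖^2)⁻¹ • a) ((1-‖a‖^2)⁻¹))ᶜ : Set E) := by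
  set lam : ℝ := 1 - ‖a‖^2 with hlam
  have hlam0 : 0 < lam := by nlinarith [norm_nonneg a]
  have hlam1 : lam ≤ 1 := by nlinarith [norm_nonneg a]
  have haExt : a ∉ ((closedBall (a + lam⁻¹ • a) (lam⁻¹))ᶜ : Set E) := by
    rw [mem_ext_iff, not_lt, dist_eq_norm]
    have : a - (a + lam⁻¹ • a) = -(lam⁻¹ • a) := by abel
    rw [this, norm_neg, norm_smul, Real.norm_eq_abs, abs_of_pos (inv_pos.2 hlam0)]
    nlinarith [inv_pos.2 hlam0, norm_nonneg a]
  have hfwd : Set.MapsTo (inversion a 1) (ball 0 1 \ {a})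
      ((closedBall (a + lam⁻¹ • a) (lam⁻¹))ᶜ : Set E) := by
    rintro x ⟨hx1, hxa⟩
    rw [Metric.mem_ball, dist_zero_right] at hx1
    exact (inva_mem_iff ha (by simpa using hxa)).1 hx1
  have hbwd : Set.MapsTo (inversion a 1) ((closedBall (a + lam⁻¹ • a) (lam⁻¹))ᶜ : Set E)
      (ball 0 1 \ {a}) := by
    intro w hw
    have hwa : w ≠ a := fun h => haExt (h ▸ hw)
    have hxa : inversion a 1 w ≠ a := by
      rw [ne_eq, inversion_eq_center one_ne_zero]; exact hwa
    have : inversion a 1 (inversion a 1 w) = w := inversion_inversion a one_ne_zero w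
    refine ⟨?_, by simpa using hxa⟩
    rw [Metric.mem_ball, dist_zero_right]
    exact (inva_mem_iff ha hxa).2 (by rwa [this])
  exact Set.InvOn.bijOn ⟨fun x _ => inversion_inversion a one_ne_zero x,
    fun x _ => inversion_inversion a one_ne_zero x⟩ hfwd hbwd

/-- `f` preserves the absolute cross-ratio on `s` (the characteristic property of
Möbius maps, stated multiplicatively to avoid divisions). -/
def PreservesCrossRatio {n : ℕ} (f : EuclideanSpace ℝ (Fin n) → EuclideanSpace ℝ (Fin n))
    (s : Set (EuclideanSpace ℝ (Fin n))) : Prop :=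
  ∀ x ∈ s, ∀ y ∈ s, ∀ z ∈ s, ∀ t ∈ s,
    dist (f x) (f y) * dist (f z) (f t) * dist x z * dist y t =
      dist x y * dist z t * dist (f x) (f z) * dist (f y) (f t)

set_option maxHeartbeats 2000000 in
theorem stmt17 {n : ℕ} (hn : 2 ≤ n) (a : EuclideanSpace ℝ (Fin n)) (ha : ‖a‖ < 1)
    (f : EuclideanSpace ℝ (Fin n) → EuclideanSpace ℝ (Fin n))
    (hMob : PreservesCrossRatio f (Metric.ball 0 1))
    (hBij : Set.BijOn f (Metric.ball 0 1 \ {0}) (Metric.ball 0 1 \ {a}))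
    (hf0 : f 0 = a) :
    let χ : EuclideanSpace ℝ (Fin n) → EuclideanSpace ℝ (Fin n) →
        EuclideanSpace ℝ (Fin n) → ℝ := fun p u v =>
      Real.log (1 + ‖u - v‖ / (‖u - p‖ * ‖v - p‖))
    (∀ x ∈ Metric.ball (0 : EuclideanSpace ℝ (Fin n)) 1 \ {0},
      ∀ y ∈ Metric.ball (0 : EuclideanSpace ℝ (Fin n)) 1 \ {0},
        χ 0 x y ≤ χ a (f x) (f y) ∧
        χ a (f x) (f y) ≤ χ 0 x y - Real.log (1 - ‖a‖ ^ 2)) ∧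
    ((∀ x ∈ Metric.ball (0 : EuclideanSpace ℝ (Fin n)) 1 \ {0},
      ∀ y ∈ Metric.ball (0 : EuclideanSpace ℝ (Fin n)) 1 \ {0},
        χ 0 x y = χ a (f x) (f y) ∧
        χ a (f x) (f y) = χ 0 x y - Real.log (1 - ‖a‖ ^ 2)) ↔ a = 0) := by
  intro χ
  classical
  have hχdef : ∀ p u v : EuclideanSpace ℝ (Fin n),
      χ p u v = Real.log (1 + ‖u - v‖ / (‖u - p‖ * ‖v - p‖)) := fun _ _ _ => rfl
  set B0 : Set (EuclideanSpace ℝ (Fin n)) := Metric.ball 0 1 \ {0} with hB0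
  have hmemB0 : ∀ x : EuclideanSpace ℝ (Fin n), x ∈ B0 ↔ ‖x‖ < 1 ∧ x ≠ 0 := by
    intro x
    rw [hB0, Set.mem_diff, Metric.mem_ball, dist_zero_right, Set.mem_singleton_iff]
  -- basic points
  have i0 : Fin n := ⟨0, by omega⟩
  set e1 : EuclideanSpace ℝ (Fin n) := EuclideanSpace.single i0 (1:ℝ) with he1def
  have he1 : ‖e1‖ = 1 := by rw [he1def, EuclideanSpace.norm_single]; norm_num
  have hsingle_norm : ∀ t : ℝ,
      ‖(EuclideanSpace.single i0 t : EuclideanSpace ℝ (Fin n))‖ = |t| := by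
    intro t; rw [EuclideanSpace.norm_single]; exact Real.norm_eq_abs t
  have hsingle_mem : ∀ t : ℝ, 0 < t → t < 1 →
      (EuclideanSpace.single i0 t : EuclideanSpace ℝ (Fin n)) ∈ B0 := by
    intro t ht0 ht1
    rw [hmemB0, hsingle_norm, abs_of_pos ht0]
    refine ⟨ht1, fun h => ?_⟩
    have h2 : ‖(EuclideanSpace.single i0 t : EuclideanSpace ℝ (Fin n))‖ = 0 := by
      rw [h]; simp
    rw [hsingle_norm, abs_of_pos ht0] at h2
    exact ht0.ne' h2
  have hsingle_ne : ∀ s t : ℝ, 0 ≤ s → 0 ≤ t → s ≠ t →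
      (EuclideanSpace.single i0 s : EuclideanSpace ℝ (Fin n))
        ≠ EuclideanSpace.single i0 t := by
    intro s t hs ht hst h
    have h2 := congrArg norm h
    rw [hsingle_norm, hsingle_norm, abs_of_nonneg hs, abs_of_nonneg ht] at h2
    exact hst h2
  set p : EuclideanSpace ℝ (Fin n) := EuclideanSpace.single i0 (1/2) with hpdef
  set q : EuclideanSpace ℝ (Fin n) := EuclideanSpace.single i0 (1/4) with hqdef
  set c1 : EuclideanSpace ℝ (Fin n) := EuclideanSpace.single i0 (1/8) with hc1def
  set c2 : EuclideanSpace ℝ (Fin n) := EuclideanSpace.single i0 (1/16) with hc2def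
  set c3 : EuclideanSpace ℝ (Fin n) := EuclideanSpace.single i0 (1/32) with hc3def
  have hpB : p ∈ B0 := hsingle_mem _ (by norm_num) (by norm_num)
  have hqB : q ∈ B0 := hsingle_mem _ (by norm_num) (by norm_num)
  have hc1B : c1 ∈ B0 := hsingle_mem _ (by norm_num) (by norm_num)
  have hc2B : c2 ∈ B0 := hsingle_mem _ (by norm_num) (by norm_num)
  have hc3B : c3 ∈ B0 := hsingle_mem _ (by norm_num) (by norm_num)
  have hpq : p ≠ q := hsingle_ne _ _ (by norm_num) (by norm_num) (by norm_num)
  have hc1q : c1 ≠ q := hsingle_ne _ _ (by norm_num) (by norm_num) (by norm_num)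
  have hc2q : c2 ≠ q := hsingle_ne _ _ (by norm_num) (by norm_num) (by norm_num)
  have hc3c1 : c3 ≠ c1 := hsingle_ne _ _ (by norm_num) (by norm_num) (by norm_num)
  have hc3c2 : c3 ≠ c2 := hsingle_ne _ _ (by norm_num) (by norm_num) (by norm_num)
  have hc2c1 : c2 ≠ c1 := hsingle_ne _ _ (by norm_num) (by norm_num) (by norm_num)
  have hfa : ∀ x ∈ B0, f x ≠ a := by
    intro x hx h
    exact (hBij.mapsTo hx).2 (by simpa using h)
  have hB0sub : B0 ⊆ Metric.ball 0 1 := Set.diff_subset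
  have h0ball : (0 : EuclideanSpace ℝ (Fin n)) ∈ Metric.ball (0:EuclideanSpace ℝ (Fin n)) 1 := by
    simp
  -- the fundamental identity specialised at z = 0
  have hI1 : ∀ x ∈ Metric.ball (0:EuclideanSpace ℝ (Fin n)) 1,
      ∀ y ∈ Metric.ball (0:EuclideanSpace ℝ (Fin n)) 1,
      ∀ s ∈ Metric.ball (0:EuclideanSpace ℝ (Fin n)) 1,
      dist (f x) (f y) * dist (f s) a * ‖x‖ * dist y s
        = dist x y * ‖s‖ * dist (f x) a * dist (f y) (f s) := by
    intro x hx y hy s hs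
    have H := hMob x hx y hy 0 h0ball s hs
    rw [hf0, dist_comm a (f s), dist_zero_right, dist_zero_left] at H
    exact H
  -- the four-point identity
  have hK : ∀ x ∈ Metric.ball (0:EuclideanSpace ℝ (Fin n)) 1,
      ∀ y ∈ Metric.ball (0:EuclideanSpace ℝ (Fin n)) 1,
      ∀ s ∈ Metric.ball (0:EuclideanSpace ℝ (Fin n)) 1,
      ∀ r ∈ Metric.ball (0:EuclideanSpace ℝ (Fin n)) 1, s ≠ y → r ≠ s →
      dist (f x) (f y) * dist (f s) a * dist (f r) a * ‖x‖ * ‖y‖ * dist s r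
        = dist x y * dist (f x) a * dist (f y) a * (dist (f s) (f r) * ‖s‖ * ‖r‖) := by
    intro x hx y hy s hs r hr hsy hrs
    have e1 := hI1 x hx y hy s hs
    have e2 := hI1 y hy s hs r hr
    have hys : dist y s ≠ 0 := dist_ne_zero.2 (Ne.symm hsy)
    have h3 : (dist (f x) (f y) * dist (f s) a * dist (f r) a * ‖x‖ * ‖y‖ * dist s r
        - dist x y * dist (f x) a * dist (f y) a * (dist (f s) (f r) * ‖s‖ * ‖r‖))
        * dist y s = 0 := by
      linear_combination (dist (f r) a * ‖y‖ * dist s r) * e1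
        + (dist x y * ‖s‖ * dist (f x) a) * e2
    rcases mul_eq_zero.1 h3 with h4 | h4
    · linarith [sub_eq_zero.1 h4]
    · exact absurd h4 hys
  -- the cross-ratio constant
  set α : ℝ := dist (f p) (f q) * ‖p‖ * ‖q‖ with hαdef
  set β : ℝ := dist p q * dist (f p) a * dist (f q) a with hβdef
  have hα : 0 < α := by
    have h1 : f p ≠ f q := fun h => hpq (hBij.injOn hpB hqB h)
    have h2 : (0:ℝ) < ‖p‖ := norm_pos_iff.2 ((hmemB0 p).1 hpB).2
    have h3 : (0:ℝ) < ‖q‖ := norm_pos_iff.2 ((hmemB0 q).1 hqB).2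
    exact mul_pos (mul_pos (dist_pos.2 h1) h2) h3
  have hβ : 0 < β :=
    mul_pos (mul_pos (dist_pos.2 hpq) (dist_pos.2 (hfa p hpB)))
      (dist_pos.2 (hfa q hqB))
  -- the key multiplicative relation
  have hStar : ∀ x ∈ Metric.ball (0:EuclideanSpace ℝ (Fin n)) 1,
      ∀ y ∈ Metric.ball (0:EuclideanSpace ℝ (Fin n)) 1,
      dist (f x) (f y) * ‖x‖ * ‖y‖ * β = dist x y * dist (f x) a * dist (f y) a * α := by
    intro x hx y hy
    set s : EuclideanSpace ℝ (Fin n) := if y = c1 then c2 else c1 with hsdef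
    have hsB : s ∈ B0 := by rw [hsdef]; split_ifs <;> assumption
    have hsy : s ≠ y := by
      rw [hsdef]; split_ifs with h
      · rw [h]; exact hc2c1
      · exact fun hh => h hh.symm
    have hsq : s ≠ q := by rw [hsdef]; split_ifs <;> assumption
    have hrs : c3 ≠ s := by rw [hsdef]; split_ifs <;> assumption
    have e1 := hK x hx y hy s (hB0sub hsB) c3 (hB0sub hc3B) hsy hrs
    have e2 := hK p (hB0sub hpB) q (hB0sub hqB) s (hB0sub hsB) c3 (hB0sub hc3B)
      hsq hrs
    have hhs : dist (f s) a ≠ 0 := dist_ne_zero.2 (hfa s hsB)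
    have hhr : dist (f c3) a ≠ 0 := dist_ne_zero.2 (hfa c3 hc3B)
    have hsc3 : dist s c3 ≠ 0 := dist_ne_zero.2 (Ne.symm hrs)
    have h3 : (dist (f x) (f y) * ‖x‖ * ‖y‖ * β
        - dist x y * dist (f x) a * dist (f y) a * α)
        * (dist (f s) a * dist (f c3) a * dist s c3) = 0 := by
      rw [hαdef, hβdef]
      linear_combination (dist p q * dist (f p) a * dist (f q) a) * e1
        - (dist x y * dist (f x) a * dist (f y) a) * e2
    rcases mul_eq_zero.1 h3 with h4 | h4
    · linarith [sub_eq_zero.1 h4]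
    · exact absurd h4 (mul_ne_zero (mul_ne_zero hhs hhr) hsc3)
  set c : ℝ := α / β with hcdef
  have hc : 0 < c := div_pos hα hβ
  have hStar' : ∀ x ∈ Metric.ball (0:EuclideanSpace ℝ (Fin n)) 1,
      ∀ y ∈ Metric.ball (0:EuclideanSpace ℝ (Fin n)) 1,
      dist (f x) (f y) * ‖x‖ * ‖y‖ = c * (dist x y * dist (f x) a * dist (f y) a) := by
    intro x hx y hy
    have h := hStar x hx y hy
    rw [hcdef]
    field_simp
    linear_combination h
  -- conjugate to a similarity between exteriors of balls
  set lam : ℝ := 1 - ‖a‖^2 with hlamdef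
  have hlam0 : 0 < lam := by rw [hlamdef]; nlinarith [norm_nonneg a]
  have hlam1 : lam ≤ 1 := by rw [hlamdef]; nlinarith [norm_nonneg a]
  set z2 : EuclideanSpace ℝ (Fin n) := a + lam⁻¹ • a with hz2def
  set Ext1 : Set (EuclideanSpace ℝ (Fin n)) :=
    (closedBall (0:EuclideanSpace ℝ (Fin n)) 1)ᶜ with hExt1
  set Ext2 : Set (EuclideanSpace ℝ (Fin n)) := (closedBall z2 (lam⁻¹))ᶜ with hExt2
  have hψbij : Set.BijOn
      (fun w => inversion a 1 (f (inversion 0 1 w))) Ext1 Ext2 := by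
    have h1 : Set.BijOn (inversion (0:EuclideanSpace ℝ (Fin n)) 1) Ext1 B0 :=
      inv_unit_bijOn
    have h2 : Set.BijOn (inversion a 1) (Metric.ball 0 1 \ {a}) Ext2 := inva_bijOn ha
    exact h2.comp (hBij.comp h1)
  have hExt1ne : Ext1.Nonempty := ext_nonempty one_pos he1
  have hψd : ∀ u ∈ Ext1, ∀ v ∈ Ext1,
      dist (inversion a 1 (f (inversion 0 1 u))) (inversion a 1 (f (inversion 0 1 v)))
        = c * dist u v := by
    intro u hu v hv
    have hu1 : 1 < dist u 0 := mem_ext_iff.1 hu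
    have hv1 : 1 < dist v 0 := mem_ext_iff.1 hv
    have hu0 : u ≠ 0 := by
      intro h; rw [h] at hu1; simp at hu1; linarith
    have hv0 : v ≠ 0 := by
      intro h; rw [h] at hv1; simp at hv1; linarith
    have hxB : inversion 0 1 u ∈ B0 := inv_unit_mapsTo_ball hu
    have hyB : inversion 0 1 v ∈ B0 := inv_unit_mapsTo_ball hv
    have hfx : f (inversion 0 1 u) ≠ a := hfa _ hxB
    have hfy : f (inversion 0 1 v) ≠ a := hfa _ hyB
    have hdfx : (0:ℝ) < dist (f (inversion 0 1 u)) a := dist_pos.2 hfx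
    have hdfy : (0:ℝ) < dist (f (inversion 0 1 v)) a := dist_pos.2 hfy
    have h1 := dist_inversion_inversion hfx hfy 1
    have h2 := dist_inversion_inversion hu0 hv0 1
    have h3 : ‖inversion (0:EuclideanSpace ℝ (Fin n)) 1 u‖ = 1 / dist u 0 := by
      rw [← dist_zero_right, dist_inversion_center, one_pow]
    have h4 : ‖inversion (0:EuclideanSpace ℝ (Fin n)) 1 v‖ = 1 / dist v 0 := by
      rw [← dist_zero_right, dist_inversion_center, one_pow]
    have hs := hStar' _ (hB0sub hxB) _ (hB0sub hyB)
    rw [h3, h4, h2] at hs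
    rw [h1, one_pow]
    have hdu : (0:ℝ) < dist u 0 := by linarith
    have hdv : (0:ℝ) < dist v 0 := by linarith
    rw [div_mul_eq_mul_div, div_eq_iff (by positivity : (0:ℝ) ≠ _).symm]
    have hun : ‖u‖ ≠ 0 := by rw [← dist_zero_right]; exact hdu.ne'
    have hvn : ‖v‖ ≠ 0 := by rw [← dist_zero_right]; exact hdv.ne'
    field_simp at hs
    rw [one_mul]
    linear_combination hs
  have hbdd1 : BddAbove (gapSet Ext1) := gapSet_bddAbove one_pos he1
  have hg1 : gapD Ext2 = c * gapD Ext1 := gapD_map hExt1ne hψbij hc hψd hbdd1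
  have hsim : Set.BijOn (fun x => z2 + lam⁻¹ • x) Ext1 Ext2 :=
    sim_bijOn (inv_pos.2 hlam0) z2
  have hg2 : gapD Ext2 = lam⁻¹ * gapD Ext1 :=
    gapD_map hExt1ne hsim (inv_pos.2 hlam0)
      (fun u _ v _ => sim_dist (inv_pos.2 hlam0) z2 u v) hbdd1
  have hgpos : 0 < gapD Ext1 :=
    lt_of_lt_of_le (by norm_num) (gapD_lower one_pos he1)
  have hceq : c = lam⁻¹ := mul_right_cancel₀ hgpos.ne' (hg1.symm.trans hg2)
  have hlamc : lam * c = 1 := by rw [hceq]; field_simp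
  have hc1 : 1 ≤ c := by nlinarith
  -- ratio identity in norm form
  have hratio : ∀ x ∈ B0, ∀ y ∈ B0,
      ‖f x - f y‖ / (‖f x - a‖ * ‖f y - a‖) = c * (‖x - y‖ / (‖x‖ * ‖y‖)) := by
    intro x hx y hy
    have hs := hStar' x (hB0sub hx) y (hB0sub hy)
    rw [dist_eq_norm, dist_eq_norm, dist_eq_norm, dist_eq_norm] at hs
    have h1 : (0:ℝ) < ‖x‖ := norm_pos_iff.2 ((hmemB0 x).1 hx).2
    have h2 : (0:ℝ) < ‖y‖ := norm_pos_iff.2 ((hmemB0 y).1 hy).2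
    have h3 : (0:ℝ) < ‖f x - a‖ := by
      rw [norm_sub_pos_iff]; exact hfa x hx
    have h4 : (0:ℝ) < ‖f y - a‖ := by
      rw [norm_sub_pos_iff]; exact hfa y hy
    field_simp
    linear_combination hs
  have hχ0 : ∀ x y : EuclideanSpace ℝ (Fin n),
      χ 0 x y = Real.log (1 + ‖x - y‖ / (‖x‖ * ‖y‖)) := by
    intro x y; rw [hχdef, sub_zero, sub_zero]
  have hχa : ∀ x ∈ B0, ∀ y ∈ B0,
      χ a (f x) (f y) = Real.log (1 + c * (‖x - y‖ / (‖x‖ * ‖y‖))) := by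
    intro x hx y hy; rw [hχdef, hratio x hx y hy]
  have main : ∀ x ∈ B0, ∀ y ∈ B0, χ 0 x y ≤ χ a (f x) (f y) ∧
      χ a (f x) (f y) ≤ χ 0 x y - Real.log lam := by
    intro x hx y hy
    set t : ℝ := ‖x - y‖ / (‖x‖ * ‖y‖) with htdef
    have ht : 0 ≤ t := by positivity
    rw [hχ0, hχa x hx y hy]
    constructor
    · exact Real.log_le_log (by positivity) (by nlinarith)
    · have h2 : 1 + c * t ≤ (1 + t) / lam := by
        rw [le_div_iff₀ hlam0]; nlinarith
      calc Real.log (1 + c * t) ≤ Real.log ((1 + t) / lam) :=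
            Real.log_le_log (by positivity) h2
        _ = Real.log (1 + t) - Real.log lam :=
            Real.log_div (by positivity) hlam0.ne'
  refine ⟨main, ⟨fun H => ?_, fun h0 => ?_⟩⟩
  · have hEq := (H p hpB q hqB).1
    rw [hχ0, hχa p hpB q hqB] at hEq
    set t0 : ℝ := ‖p - q‖ / (‖p‖ * ‖q‖) with ht0def
    have hpq' : (0:ℝ) < ‖p - q‖ := by rw [norm_sub_pos_iff]; exact hpq
    have hpn : (0:ℝ) < ‖p‖ := norm_pos_iff.2 ((hmemB0 p).1 hpB).2
    have hqn : (0:ℝ) < ‖q‖ := norm_pos_iff.2 ((hmemB0 q).1 hqB).2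
    have ht0 : 0 < t0 := by positivity
    have h1 : (1:ℝ) + t0 = 1 + c * t0 := by
      have e1 := Real.exp_log (show (0:ℝ) < 1 + t0 by positivity)
      have e2 := Real.exp_log (show (0:ℝ) < 1 + c * t0 by positivity)
      rw [← e1, ← e2, hEq]
    have hc1' : c = 1 := by
      have h2 : (c - 1) * t0 = 0 := by linarith
      rcases mul_eq_zero.1 h2 with h | h
      · linarith
      · exact absurd h ht0.ne'
    have h3 : lam = 1 := by rw [hc1'] at hlamc; linarith
    rw [hlamdef] at h3
    have h4 : ‖a‖ = 0 := by nlinarith [norm_nonneg a]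
    exact norm_eq_zero.1 h4
  · have hlam1' : lam = 1 := by rw [hlamdef, h0]; simp
    have hc1' : c = 1 := by rw [hlam1'] at hlamc; linarith
    intro x hx y hy
    refine ⟨?_, ?_⟩
    · rw [hχ0, hχa x hx y hy, hc1', one_mul]
    · rw [hχa x hx y hy, hχ0, hc1', one_mul, hlam1', Real.log_one, sub_zero]
end

section
/- If (X,d) is a metric space and p ∈ X, then τ_p(x,y) = log(1 + 2d(x,y)/√(d(p,x)d(p,y))) satisfies the triangle inequality on X \ {p} whenever (X,d) is a Ptolemy space, and hence τ_p is a metric on X \ {p}. -/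
private lemma aux19 (u v w dxy dyz dxz : ℝ) (hu : 0 < u) (hv : 0 < v) (hw : 0 < w)
    (hdxy : 0 ≤ dxy) (hdyz : 0 ≤ dyz)
    (hP : dxz * v ^ 2 ≤ dxy * w ^ 2 + dyz * u ^ 2)
    (h1 : w ^ 2 ≤ v ^ 2 + dyz) (h2 : u ^ 2 ≤ v ^ 2 + dxy) :
    dxz * v ^ 2 ≤ dxy * (v * w) + dyz * (u * v) + 2 * (dxy * dyz) := by
  have hA : w * (w - v) ≤ dyz := by
    rcases le_total w v with h | h
    · nlinarith
    · nlinarith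
  have hB : u * (u - v) ≤ dxy := by
    rcases le_total u v with h | h
    · nlinarith
    · nlinarith
  nlinarith [mul_le_mul_of_nonneg_left hA hdxy, mul_le_mul_of_nonneg_left hB hdyz]

theorem stmt19 {X : Type*} [MetricSpace X]
    (hPt : ∀ x1 x2 x3 x4 : X,
      dist x1 x2 * dist x3 x4 ≤ dist x1 x4 * dist x2 x3 + dist x1 x3 * dist x2 x4)
    (p : X) :
    let τ : X → X → ℝ := fun x y =>
      Real.log (1 + 2 * dist x y / (Real.sqrt (dist p x) * Real.sqrt (dist p y)))
    (∀ x y z : X, x ≠ p → y ≠ p → z ≠ p → τ x z ≤ τ x y + τ y z) ∧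
    (∀ x y : X, x ≠ p → y ≠ p → 0 ≤ τ x y) ∧
    (∀ x y : X, x ≠ p → y ≠ p → (τ x y = 0 ↔ x = y)) ∧
    (∀ x y : X, x ≠ p → y ≠ p → τ x y = τ y x) := by
  intro τ
  have hsq : ∀ x : X, x ≠ p → 0 < Real.sqrt (dist p x) := fun x hx =>
    Real.sqrt_pos.mpr (dist_pos.mpr (Ne.symm hx))
  have hsqsq : ∀ x : X, Real.sqrt (dist p x) ^ 2 = dist p x := fun x =>
    Real.sq_sqrt dist_nonneg
  refine ⟨?_, ?_, ?_, ?_⟩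
  · intro x y z hx hy hz
    set u := Real.sqrt (dist p x) with hu_def
    set v := Real.sqrt (dist p y) with hv_def
    set w := Real.sqrt (dist p z) with hw_def
    have hu : 0 < u := hsq x hx
    have hv : 0 < v := hsq y hy
    have hw : 0 < w := hsq z hz
    have hu' : u ≠ 0 := hu.ne'
    have hv' : v ≠ 0 := hv.ne'
    have hw' : w ≠ 0 := hw.ne'
    have hdxy : (0:ℝ) ≤ dist x y := dist_nonneg
    have hdyz : (0:ℝ) ≤ dist y z := dist_nonneg
    -- Ptolemy
    have hP : dist x z * v ^ 2 ≤ dist x y * w ^ 2 + dist y z * u ^ 2 := by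
      have := hPt x z p y
      rw [hsqsq x, hsqsq y, hsqsq z]
      calc dist x z * dist p y ≤ dist x y * dist z p + dist x p * dist z y := this
        _ = dist x y * dist p z + dist y z * dist p x := by
            rw [dist_comm z p, dist_comm x p, dist_comm z y]; ring
    have h1 : w ^ 2 ≤ v ^ 2 + dist y z := by
      rw [hsqsq y, hsqsq z]; exact dist_triangle p y z
    have h2 : u ^ 2 ≤ v ^ 2 + dist x y := by
      rw [hsqsq x, hsqsq y, dist_comm x y]; exact dist_triangle p y x
    have key : dist x z * v ^ 2 ≤
        dist x y * (v * w) + dist y z * (u * v) + 2 * (dist x y * dist y z) :=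
      aux19 u v w (dist x y) (dist y z) (dist x z) hu hv hw hdxy hdyz hP h1 h2
    have hmain : 2 * dist x z / (u * w) ≤
        2 * dist x y / (u * v) + 2 * dist y z / (v * w) +
          (2 * dist x y / (u * v)) * (2 * dist y z / (v * w)) := by
      calc 2 * dist x z / (u * w)
          = (dist x z * v ^ 2) * (2 / (u * v ^ 2 * w)) := by field_simp
        _ ≤ (dist x y * (v * w) + dist y z * (u * v) + 2 * (dist x y * dist y z)) *
              (2 / (u * v ^ 2 * w)) := by
            exact mul_le_mul_of_nonneg_right key (by positivity)
        _ = 2 * dist x y / (u * v) + 2 * dist y z / (v * w) +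
              (2 * dist x y / (u * v)) * (2 * dist y z / (v * w)) := by
            field_simp
    show Real.log (1 + 2 * dist x z / (u * w)) ≤
        Real.log (1 + 2 * dist x y / (u * v)) + Real.log (1 + 2 * dist y z / (v * w))
    rw [← Real.log_mul (by positivity) (by positivity)]
    apply Real.log_le_log (by positivity)
    nlinarith [hmain]
  · intro x y hx hy
    have := hsq x hx
    have := hsq y hy
    simp only [τ]
    apply Real.log_nonneg
    have : 0 ≤ 2 * dist x y / (Real.sqrt (dist p x) * Real.sqrt (dist p y)) := by positivity
    linarith
  · intro x y hx hy
    have hu := hsq x hx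
    have hv := hsq y hy
    simp only [τ]
    constructor
    · intro h
      have hB : 0 ≤ 2 * dist x y / (Real.sqrt (dist p x) * Real.sqrt (dist p y)) := by positivity
      rcases Real.log_eq_zero.mp h with h' | h' | h'
      · linarith
      · have : 2 * dist x y / (Real.sqrt (dist p x) * Real.sqrt (dist p y)) = 0 := by linarith
        have hd : dist x y = 0 := by
          rcases div_eq_zero_iff.mp this with h | h
          · linarith
          · exact absurd h (by positivity)
        exact dist_eq_zero.mp hd
      · linarith
    · intro h
      subst h
      simp
  · intro x y hx hy
    simp only [τ, dist_comm x y, mul_comm (Real.sqrt (dist p x)) (Real.sqrt (dist p y))]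
end
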